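/- Descent lemma for clipped Newton updates: let ∇²L(θ) = Vᵀ Σ V be an eigendecomposition with V orthogonal, Σ = diag(σ₁,…,σ_d), and let v_i be the i-th row of V. For any η, ρ > 0 with ηρ ≤ R/√d, the update θ₊ = θ - η Vᵀ clip(V(∇²L(θ))⁻¹∇L(θ), ρ) (clipping coordinatewise to [-ρ, ρ]) satisfies L(θ₊) - L(θ) ≤ -(η - η²) Σ_{i=1}^d min{ρ|v_iᵀ∇L(θ)|, σ_i⁻¹|v_iᵀ∇L(θ)|²}. -/

import Mathlib

open scoped InnerProductSpace
open scoped RealInnerProductSpace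
open Matrix
noncomputable section

/-- Coordinatewise clipping of a vector to `[-ρ, ρ]`. -/
def clipVec {d : ℕ} (ρ : ℝ) (z : EuclideanSpace ℝ (Fin d)) : EuclideanSpace ℝ (Fin d) :=
  (WithLp.equiv 2 (Fin d → ℝ)).symm fun i => max (min (z i) ρ) (-ρ)

section SophiaHelpers

variable {d : ℕ}

-- bridge: real inner product on EuclideanSpace as dot product / sum
lemma ip_sum (x y : EuclideanSpace ℝ (Fin d)) : ⟪x, y⟫ = ∑ i, x i * y i := by
  simp [inner, RCLike.inner_apply]
  exact Finset.sum_congr rfl (fun _ _ => mul_comm _ _)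

lemma tEL_apply (M : Matrix (Fin d) (Fin d) ℝ) (x : EuclideanSpace ℝ (Fin d)) (i : Fin d) :
    Matrix.toEuclideanLin M x i = (M *ᵥ (fun j => x j)) i := by
  rfl

lemma ip_tEL (M : Matrix (Fin d) (Fin d) ℝ) (x y : EuclideanSpace ℝ (Fin d)) :
    ⟪x, Matrix.toEuclideanLin M y⟫ = (fun i => x i) ⬝ᵥ (M *ᵥ fun j => y j) := by
  rw [ip_sum]; rfl

lemma tEL_eigen (A : Matrix (Fin d) (Fin d) ℝ) (hA : A.IsHermitian) (j : Fin d) :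
    Matrix.toEuclideanLin A (hA.eigenvectorBasis j) =
      hA.eigenvalues j • hA.eigenvectorBasis j := by
  ext i
  have h := congrFun (hA.mulVec_eigenvectorBasis j) i
  simpa [tEL_apply] using h

lemma rayleigh_bound (A : Matrix (Fin d) (Fin d) ℝ) (hA : A.IsHermitian) (C : ℝ)
    (hev : ∀ i, hA.eigenvalues i ≤ C) (y : EuclideanSpace ℝ (Fin d)) :
    ⟪y, Matrix.toEuclideanLin A y⟫ ≤ C * ‖y‖ ^ 2 := by
  set b := hA.eigenvectorBasis with hb
  have hy : y = ∑ j, b.repr y j • b j := (b.sum_repr y).symm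
  have hTy : Matrix.toEuclideanLin A y = ∑ j, (b.repr y j * hA.eigenvalues j) • b j := by
    conv_lhs => rw [hy]
    rw [map_sum]
    congr 1; ext j
    rw [_root_.map_smul, tEL_eigen A hA j, smul_smul]
  have hin : ⟪y, Matrix.toEuclideanLin A y⟫ = ∑ j, hA.eigenvalues j * (b.repr y j)^2 := by
    rw [hTy, inner_sum]
    congr 1; ext j
    rw [real_inner_smul_right]
    have : ⟪y, b j⟫ = b.repr y j := by
      rw [real_inner_comm, b.repr_apply_apply]
    rw [this]; ring
  have hpar : ∑ j, (b.repr y j)^2 = ‖y‖^2 := by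
    have h1 : ‖b.repr y‖ = ‖y‖ := b.repr.norm_map y
    rw [← h1, EuclideanSpace.norm_eq, Real.sq_sqrt (by positivity)]
    simp [sq_abs]
  calc ⟪y, Matrix.toEuclideanLin A y⟫ = ∑ j, hA.eigenvalues j * (b.repr y j)^2 := hin
    _ ≤ ∑ j, C * (b.repr y j)^2 := by
        apply Finset.sum_le_sum
        intro i _
        exact mul_le_mul_of_nonneg_right (hev i) (sq_nonneg _)
    _ = C * ‖y‖^2 := by rw [← Finset.mul_sum, hpar]

lemma tEL_mul (M N : Matrix (Fin d) (Fin d) ℝ) (x : EuclideanSpace ℝ (Fin d)) :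
    Matrix.toEuclideanLin (M * N) x = Matrix.toEuclideanLin M (Matrix.toEuclideanLin N x) := by
  ext i
  simp only [tEL_apply, ← Matrix.mulVec_mulVec]

lemma transpose_eq_of_herm {N : Matrix (Fin d) (Fin d) ℝ} (hN : N.IsHermitian) : Nᵀ = N := by
  exact (Matrix.conjTranspose_eq_transpose_of_trivial N).symm.trans hN.eq

lemma ip_sym_move {N : Matrix (Fin d) (Fin d) ℝ} (hN : N.IsHermitian)
    (a b : EuclideanSpace ℝ (Fin d)) :
    ⟪Matrix.toEuclideanLin N a, b⟫ = ⟪a, Matrix.toEuclideanLin N b⟫ := by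
  rw [ip_sum, ip_sum]
  have h : ((fun i => (Matrix.toEuclideanLin N a) i) : Fin d → ℝ) = N *ᵥ (fun j => a j) := rfl
  calc ∑ i, (Matrix.toEuclideanLin N a) i * b i
      = (N *ᵥ (fun j => a j)) ⬝ᵥ (fun j => b j) := rfl
    _ = (fun j => a j) ⬝ᵥ (N *ᵥ (fun j => b j)) := by
        rw [dotProduct_comm, Matrix.dotProduct_mulVec, ← Matrix.vecMul_transpose,
          transpose_eq_of_herm hN, dotProduct_comm]
    _ = ∑ i, a i * (Matrix.toEuclideanLin N b) i := rfl

lemma eigen_le_of_similar (M S A : Matrix (Fin d) (Fin d) ℝ) (hA : A.IsHermitian)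
    (hS : IsUnit S.det) (hsim : A = S * M * S⁻¹) (C : ℝ)
    (hM : ‖(Matrix.toEuclideanLin M).toContinuousLinearMap‖ ≤ C) :
    ∀ i, hA.eigenvalues i ≤ C := by
  intro i
  set v := hA.eigenvectorBasis i with hv
  set lam := hA.eigenvalues i with hlam
  set w := Matrix.toEuclideanLin S⁻¹ v with hw
  have hMw : Matrix.toEuclideanLin M w = lam • w := by
    have hMS : M * S⁻¹ = S⁻¹ * A := by
      have h1 : S⁻¹ * (S * M * S⁻¹) = M * S⁻¹ := by
        rw [← Matrix.mul_assoc, ← Matrix.mul_assoc, Matrix.nonsing_inv_mul _ hS, Matrix.one_mul]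
      rw [← hsim] at h1
      exact h1.symm
    rw [hw, ← tEL_mul, hMS, tEL_mul, tEL_eigen A hA i, _root_.map_smul]
  have hvne : v ≠ 0 := by
    have h1 : ‖v‖ = 1 := hA.eigenvectorBasis.orthonormal.1 i
    intro h
    rw [h, norm_zero] at h1
    norm_num at h1
  have hwne : w ≠ 0 := by
    intro h
    have h2 : Matrix.toEuclideanLin S w = v := by
      rw [hw, ← tEL_mul, Matrix.mul_nonsing_inv _ hS]
      ext i; simp [tEL_apply, Matrix.one_mulVec]
    rw [h, map_zero] at h2
    exact hvne h2.symm
  have hle : ‖Matrix.toEuclideanLin M w‖ ≤ C * ‖w‖ := by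
    calc ‖Matrix.toEuclideanLin M w‖
        = ‖(Matrix.toEuclideanLin M).toContinuousLinearMap w‖ := rfl
      _ ≤ ‖(Matrix.toEuclideanLin M).toContinuousLinearMap‖ * ‖w‖ :=
          (Matrix.toEuclideanLin M).toContinuousLinearMap.le_opNorm w
      _ ≤ C * ‖w‖ := by
          apply mul_le_mul_of_nonneg_right hM (norm_nonneg w)
  rw [hMw, norm_smul, Real.norm_eq_abs] at hle
  have hwpos : 0 < ‖w‖ := norm_pos_iff.mpr hwne
  have : |lam| ≤ C := le_of_mul_le_mul_right (by linarith [hle]) hwpos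
  exact le_trans (le_abs_self lam) this


open scoped MatrixOrder in
lemma quad_comp (H H' : Matrix (Fin d) (Fin d) ℝ) (hH : H.PosDef) (hH' : H'.IsHermitian)
    (hnorm : ‖(Matrix.toEuclideanLin (H⁻¹ * H')).toContinuousLinearMap‖ ≤ 2)
    (x : EuclideanSpace ℝ (Fin d)) :
    ⟪x, Matrix.toEuclideanLin H' x⟫ ≤ 2 * ⟪x, Matrix.toEuclideanLin H x⟫ := by
  set S := CFC.sqrt H with hSdef
  have hSherm : S.IsHermitian := (Matrix.nonneg_iff_posSemidef.mp (CFC.sqrt_nonneg H)).isHermitian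
  have hSS : S * S = H := CFC.sqrt_mul_sqrt_self H hH.posSemidef.nonneg
  have hSdet : IsUnit S.det := by
    have hdet : S.det * S.det = H.det := by rw [← Matrix.det_mul, hSS]
    have := hH.det_pos
    apply isUnit_iff_ne_zero.mpr
    intro h; rw [h, mul_zero] at hdet; rw [← hdet] at this; exact lt_irrefl _ this
  have hSiherm : (S⁻¹).IsHermitian := by
    unfold Matrix.IsHermitian
    rw [Matrix.conjTranspose_nonsing_inv, hSherm.eq]
  set A := S⁻¹ * H' * S⁻¹ with hAdef
  have hAherm : A.IsHermitian := by
    unfold Matrix.IsHermitian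
    rw [hAdef, Matrix.conjTranspose_mul, Matrix.conjTranspose_mul, hSiherm.eq, hH'.eq]
    rw [Matrix.mul_assoc]
  have hHinv : H⁻¹ = S⁻¹ * S⁻¹ := by rw [← hSS, Matrix.mul_inv_rev]
  have hsim : A = S * (H⁻¹ * H') * S⁻¹ := by
    rw [hAdef, hHinv]
    rw [show S * (S⁻¹ * S⁻¹ * H') = (S * S⁻¹) * (S⁻¹ * H') by noncomm_ring,
      Matrix.mul_nonsing_inv _ hSdet, Matrix.one_mul, Matrix.mul_assoc]
  have hev := eigen_le_of_similar (H⁻¹ * H') S A hAherm hSdet hsim 2 hnorm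
  have hray := rayleigh_bound A hAherm 2 hev (Matrix.toEuclideanLin S x)
  have hAS : A * S = S⁻¹ * H' := by
    rw [hAdef, Matrix.mul_assoc, Matrix.nonsing_inv_mul _ hSdet, Matrix.mul_one]
  have hlhs : ⟪Matrix.toEuclideanLin S x, Matrix.toEuclideanLin A (Matrix.toEuclideanLin S x)⟫
      = ⟪x, Matrix.toEuclideanLin H' x⟫ := by
    rw [← tEL_mul, hAS, ip_sym_move hSherm, ← tEL_mul, ← Matrix.mul_assoc,
      Matrix.mul_nonsing_inv _ hSdet, Matrix.one_mul]
  have hrhs : ‖Matrix.toEuclideanLin S x‖ ^ 2 = ⟪x, Matrix.toEuclideanLin H x⟫ := by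
    rw [← real_inner_self_eq_norm_sq, ip_sym_move hSherm, ← tEL_mul, hSS]
  rw [hlhs, hrhs] at hray
  exact hray

lemma descent_general
    (L : EuclideanSpace ℝ (Fin d) → ℝ)
    (grad : EuclideanSpace ℝ (Fin d) → EuclideanSpace ℝ (Fin d))
    (hess : EuclideanSpace ℝ (Fin d) → Matrix (Fin d) (Fin d) ℝ)
    (hgrad : ∀ θ, HasGradientAt L (grad θ) θ)
    (hhess : ∀ θ, HasFDerivAt grad ((Matrix.toEuclideanLin (hess θ)).toContinuousLinearMap) θ)
    (θ w : EuclideanSpace ℝ (Fin d)) (Q : ℝ)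
    (hQ : ∀ s ∈ Set.Icc (0:ℝ) 1,
      ⟪w, Matrix.toEuclideanLin (hess (θ - s • w)) w⟫ ≤ 2 * Q) :
    L (θ - w) - L θ ≤ -⟪grad θ, w⟫ + Q := by
  have hline : ∀ t : ℝ, HasDerivAt (fun s : ℝ => θ - s • w) (-w) t := by
    intro t
    have h1 : HasDerivAt (fun s : ℝ => s • w) ((1:ℝ) • w) t := (hasDerivAt_id t).smul_const w
    rw [one_smul] at h1
    exact h1.const_sub θ
  have hL : ∀ t : ℝ, HasDerivAt (fun s : ℝ => L (θ - s • w))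
      (-⟪grad (θ - t • w), w⟫) t := by
    intro t
    have h1 := ((hgrad (θ - t • w)).hasFDerivAt).comp_hasDerivAt t (hline t)
    simp [inner_neg_right] at h1
    exact h1
  have hG : ∀ t : ℝ, HasDerivAt (fun s : ℝ => ⟪w, grad (θ - s • w)⟫)
      (-⟪w, Matrix.toEuclideanLin (hess (θ - t • w)) w⟫) t := by
    intro t
    have h2 := (hhess (θ - t • w)).comp_hasDerivAt t (hline t)
    have h3 := ((innerSL ℝ w).hasFDerivAt (x := grad (θ - t • w))).comp_hasDerivAt t h2
    simp [inner_neg_right] at h3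
    exact h3
  -- monotonicity of m
  set m : ℝ → ℝ := fun s => ⟪w, grad (θ - s • w)⟫ + 2 * Q * s with hm
  have hdm : ∀ t : ℝ, HasDerivAt m
      (-⟪w, Matrix.toEuclideanLin (hess (θ - t • w)) w⟫ + 2 * Q) t := by
    intro t
    have h1 : HasDerivAt (fun s : ℝ => 2 * Q * s) (2 * Q) t := by
      simpa using (hasDerivAt_id t).const_mul (2 * Q)
    exact (hG t).add h1
  have hmmono : MonotoneOn m (Set.Icc 0 1) := by
    apply monotoneOn_of_deriv_nonneg (convex_Icc 0 1)
    · exact fun t _ => ((hdm t).differentiableAt.continuousAt).continuousWithinAt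
    · exact fun t _ => ((hdm t).differentiableAt).differentiableWithinAt
    · intro t ht
      rw [interior_Icc] at ht
      rw [(hdm t).deriv]
      have := hQ t ⟨le_of_lt ht.1, le_of_lt ht.2⟩
      linarith
  have hγ0 : θ - (0:ℝ) • w = θ := by simp
  have key1 : ∀ t ∈ Set.Icc (0:ℝ) 1, ⟪w, grad θ⟫ - 2 * Q * t ≤ ⟪w, grad (θ - t • w)⟫ := by
    intro t ht
    have h1 := hmmono (Set.left_mem_Icc.mpr zero_le_one) ht ht.1
    rw [hm] at h1
    simp only [hγ0, mul_zero, add_zero] at h1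
    linarith
  -- antitone ψ
  set ψ : ℝ → ℝ := fun s => L (θ - s • w) + s * ⟪w, grad θ⟫ - s ^ 2 * Q with hψ
  have hdψ : ∀ t : ℝ, HasDerivAt ψ
      (-⟪grad (θ - t • w), w⟫ + ⟪w, grad θ⟫ - 2 * t * Q) t := by
    intro t
    have h1 : HasDerivAt (fun s : ℝ => s * ⟪w, grad θ⟫) ⟪w, grad θ⟫ t := by
      simpa using (hasDerivAt_id t).mul_const ⟪w, grad θ⟫
    have h2 : HasDerivAt (fun s : ℝ => s ^ 2 * Q) (2 * t * Q) t := by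
      have := ((hasDerivAt_pow 2 t)).mul_const Q
      simpa [mul_comm] using this
    exact ((hL t).add h1).sub h2
  have hψanti : AntitoneOn ψ (Set.Icc 0 1) := by
    apply antitoneOn_of_deriv_nonpos (convex_Icc 0 1)
    · exact fun t _ => ((hdψ t).differentiableAt.continuousAt).continuousWithinAt
    · exact fun t _ => ((hdψ t).differentiableAt).differentiableWithinAt
    · intro t ht
      rw [interior_Icc] at ht
      rw [(hdψ t).deriv]
      have h1 := key1 t ⟨le_of_lt ht.1, le_of_lt ht.2⟩
      have h2 : ⟪grad (θ - t • w), w⟫ = ⟪w, grad (θ - t • w)⟫ := real_inner_comm _ _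
      linarith
  have hfin := hψanti (Set.left_mem_Icc.mpr zero_le_one)
      (Set.right_mem_Icc.mpr zero_le_one) zero_le_one
  rw [hψ] at hfin
  simp only [hγ0, one_smul, one_pow, one_mul, mul_zero, zero_mul, add_zero, sub_zero,
    zero_pow, pow_two] at hfin
  have h2 : ⟪grad θ, w⟫ = ⟪w, grad θ⟫ := real_inner_comm _ _
  nlinarith [hfin]

lemma clip_coord {sv ρ u : ℝ} (hσ : 0 < sv) (hρ : 0 < ρ) :
    u * max (min (sv⁻¹ * u) ρ) (-ρ) = min (ρ * |u|) (sv⁻¹ * |u| ^ 2) ∧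
    sv * (max (min (sv⁻¹ * u) ρ) (-ρ)) ^ 2 ≤ u * max (min (sv⁻¹ * u) ρ) (-ρ) := by
  have hsv : sv * sv⁻¹ = 1 := mul_inv_cancel₀ hσ.ne'
  rcases le_total 0 u with hu | hu
  · have h0 : 0 ≤ sv⁻¹ * u := mul_nonneg (inv_nonneg.2 hσ.le) hu
    rcases le_total (sv⁻¹ * u) ρ with h | h
    · have hc : max (min (sv⁻¹ * u) ρ) (-ρ) = sv⁻¹ * u := by
        rw [min_eq_left h, max_eq_left (by linarith)]
      rw [hc, abs_of_nonneg hu]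
      constructor
      · rw [min_eq_right (by nlinarith)]; ring
      · have : sv * (sv⁻¹ * u) ^ 2 = u * (sv⁻¹ * u) := by field_simp
        linarith
    · have hc : max (min (sv⁻¹ * u) ρ) (-ρ) = ρ := by
        rw [min_eq_right h, max_eq_left (by linarith)]
      rw [hc, abs_of_nonneg hu]
      have hsu : sv * (sv⁻¹ * u) = u := by field_simp
      constructor
      · rw [min_eq_left (by nlinarith)]; ring
      · nlinarith [mul_le_mul_of_nonneg_left h hσ.le]
  · have h0 : sv⁻¹ * u ≤ 0 := mul_nonpos_of_nonneg_of_nonpos (inv_nonneg.2 hσ.le) hu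
    rcases le_total (-ρ) (sv⁻¹ * u) with h | h
    · have hc : max (min (sv⁻¹ * u) ρ) (-ρ) = sv⁻¹ * u := by
        rw [min_eq_left (by linarith), max_eq_left h]
      rw [hc, abs_of_nonpos hu]
      constructor
      · rw [min_eq_right (by nlinarith)]; ring
      · have : sv * (sv⁻¹ * u) ^ 2 = u * (sv⁻¹ * u) := by field_simp
        linarith
    · have hc : max (min (sv⁻¹ * u) ρ) (-ρ) = -ρ := by
        rw [min_eq_left (by linarith), max_eq_right h]
      rw [hc, abs_of_nonpos hu]
      have hsu : sv * (sv⁻¹ * u) = u := by field_simp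
      constructor
      · rw [min_eq_left (by nlinarith)]; ring
      · nlinarith [mul_le_mul_of_nonneg_left h hσ.le]

end SophiaHelpers

/-- Descent lemma for the clipped Newton update. -/
theorem sophia_descent_lemma
    (d : ℕ)
    (L : EuclideanSpace ℝ (Fin d) → ℝ)
    (grad : EuclideanSpace ℝ (Fin d) → EuclideanSpace ℝ (Fin d))
    (hess : EuclideanSpace ℝ (Fin d) → Matrix (Fin d) (Fin d) ℝ)
    (hC2 : ContDiff ℝ 2 L)
    (hgrad : ∀ θ, HasGradientAt L (grad θ) θ)
    (hhess : ∀ θ, HasFDerivAt grad ((Matrix.toEuclideanLin (hess θ)).toContinuousLinearMap) θ)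
    (hconv : StrictConvexOn ℝ Set.univ L)
    (hpd : ∀ θ, (hess θ).PosDef)
    (θstar : EuclideanSpace ℝ (Fin d))
    (hmin : ∀ θ, L θstar ≤ L θ)
    (R : ℝ) (hR : 0 < R)
    (hhessLip : ∀ θ θ' : EuclideanSpace ℝ (Fin d), ‖θ - θ'‖ ≤ R →
      ‖(Matrix.toEuclideanLin ((hess θ')⁻¹ * hess θ)).toContinuousLinearMap‖ ≤ 2)
    (θ : EuclideanSpace ℝ (Fin d))
    (η ρ : ℝ) (hη : 0 < η) (hρ : 0 < ρ) (hηρ : η * ρ ≤ R / Real.sqrt d)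
    (V : Matrix (Fin d) (Fin d) ℝ) (hV : V ∈ Matrix.orthogonalGroup (Fin d) ℝ)
    (σ : Fin d → ℝ)
    (hdecomp : hess θ = Vᵀ * Matrix.diagonal σ * V) :
    L (θ - η • Matrix.toEuclideanLin Vᵀ
        (clipVec ρ (Matrix.toEuclideanLin V (Matrix.toEuclideanLin (hess θ)⁻¹ (grad θ)))))
      - L θ ≤
    -(η - η ^ 2) * ∑ i, min (ρ * |Matrix.toEuclideanLin V (grad θ) i|)
        ((σ i)⁻¹ * |Matrix.toEuclideanLin V (grad θ) i| ^ 2) := by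
  classical
  set g := grad θ with hgdef
  -- orthogonality
  have hVVt : V * Vᵀ = 1 := by
    have := (Matrix.mem_orthogonalGroup_iff _ _).mp hV
    simpa [Matrix.star_eq_conjTranspose, Matrix.conjTranspose_eq_transpose_of_trivial] using this
  have hVtV : Vᵀ * V = 1 := by
    have := (Matrix.mem_orthogonalGroup_iff' _ _).mp hV
    simpa [Matrix.star_eq_conjTranspose, Matrix.conjTranspose_eq_transpose_of_trivial] using this
  have hdotV : ∀ a b : Fin d → ℝ, (Vᵀ *ᵥ a) ⬝ᵥ (Vᵀ *ᵥ b) = a ⬝ᵥ b := by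
    intro a b
    rw [Matrix.dotProduct_mulVec, Matrix.vecMul_transpose, Matrix.mulVec_mulVec, hVVt,
      Matrix.one_mulVec]
  -- positivity of σ
  have hσpos : ∀ i, 0 < σ i := by
    intro i
    have hxne : Vᵀ *ᵥ Pi.single i 1 ≠ 0 := by
      intro h
      have h2 : V *ᵥ (Vᵀ *ᵥ Pi.single i 1) = Pi.single i 1 := by
        rw [Matrix.mulVec_mulVec, hVVt, Matrix.one_mulVec]
      rw [h, Matrix.mulVec_zero] at h2
      have := congrFun h2 i
      simp at this
    have hq := (hpd θ).dotProduct_mulVec_pos hxne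
    have hstar : star (Vᵀ *ᵥ Pi.single i 1) = Vᵀ *ᵥ Pi.single i 1 := by
      funext j; simp
    rw [hstar] at hq
    have hcalc : (Vᵀ *ᵥ Pi.single i 1) ⬝ᵥ (hess θ *ᵥ (Vᵀ *ᵥ Pi.single i 1)) = σ i := by
      rw [hdecomp]
      have h1 : (Vᵀ * Matrix.diagonal σ * V) *ᵥ (Vᵀ *ᵥ Pi.single i 1)
          = Vᵀ *ᵥ (Matrix.diagonal σ *ᵥ Pi.single i 1) := by
        rw [Matrix.mulVec_mulVec, Matrix.mul_assoc, Matrix.mul_assoc, hVVt, Matrix.mul_one,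
          ← Matrix.mulVec_mulVec]
      rw [h1, hdotV]
      simp [Matrix.mulVec_diagonal, dotProduct, Pi.single_apply]
    rw [hcalc] at hq
    exact hq
  -- inverse Hessian
  have hHinv : (hess θ)⁻¹ = Vᵀ * Matrix.diagonal (fun i => (σ i)⁻¹) * V := by
    apply Matrix.inv_eq_right_inv
    rw [hdecomp]
    have h1 : (Vᵀ * Matrix.diagonal σ * V) * (Vᵀ * Matrix.diagonal (fun i => (σ i)⁻¹) * V)
        = Vᵀ * (Matrix.diagonal σ * ((V * Vᵀ) * Matrix.diagonal (fun i => (σ i)⁻¹))) * V := by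
      noncomm_ring
    rw [h1, hVVt, Matrix.one_mul, Matrix.diagonal_mul_diagonal]
    have h2 : (fun i => σ i * (σ i)⁻¹) = fun _ => (1:ℝ) := by
      funext i; exact mul_inv_cancel₀ (hσpos i).ne'
    rw [h2, Matrix.diagonal_one, Matrix.mul_one, hVtV]
  set z := Matrix.toEuclideanLin V (Matrix.toEuclideanLin (hess θ)⁻¹ g) with hzdef
  set c := clipVec ρ z with hcdef
  set p := Matrix.toEuclideanLin Vᵀ c with hpdef
  set w := η • p with hwdef
  set u := Matrix.toEuclideanLin V g with hudef
  -- coordinates of z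
  have hzc : ∀ i, z i = (σ i)⁻¹ * u i := by
    intro i
    have hVH : V * (hess θ)⁻¹ = Matrix.diagonal (fun i => (σ i)⁻¹) * V := by
      rw [hHinv, show V * (Vᵀ * Matrix.diagonal (fun i => (σ i)⁻¹) * V)
        = (V * Vᵀ) * (Matrix.diagonal (fun i => (σ i)⁻¹) * V) by noncomm_ring, hVVt,
        Matrix.one_mul]
    rw [hzdef, ← tEL_mul, hVH, tEL_apply, ← Matrix.mulVec_mulVec, Matrix.mulVec_diagonal]
    rfl
  have hcc : ∀ i, c i = max (min ((σ i)⁻¹ * u i) ρ) (-ρ) := by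
    intro i
    rw [hcdef, ← hzc i]
    rfl
  -- sum identities
  have hgp : ⟪g, p⟫ = ∑ i, u i * c i := by
    calc ⟪g, p⟫ = (fun i => g i) ⬝ᵥ (Vᵀ *ᵥ fun j => c j) := by rw [ip_sum]; rfl
      _ = (V *ᵥ fun j => g j) ⬝ᵥ (fun j => c j) := by
          rw [Matrix.dotProduct_mulVec, Matrix.vecMul_transpose]
      _ = ∑ i, u i * c i := rfl
  have hQsum : ⟪p, Matrix.toEuclideanLin (hess θ) p⟫ = ∑ i, σ i * c i ^ 2 := by
    have hHVt : hess θ * Vᵀ = Vᵀ * Matrix.diagonal σ := by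
      rw [hdecomp, show Vᵀ * Matrix.diagonal σ * V * Vᵀ
        = Vᵀ * Matrix.diagonal σ * (V * Vᵀ) by noncomm_ring, hVVt, Matrix.mul_one]
    have h1 : Matrix.toEuclideanLin (hess θ) p
        = Matrix.toEuclideanLin Vᵀ (Matrix.toEuclideanLin (Matrix.diagonal σ) c) := by
      rw [hpdef, ← tEL_mul, hHVt, tEL_mul]
    rw [h1, hpdef]
    calc ⟪Matrix.toEuclideanLin Vᵀ c,
          Matrix.toEuclideanLin Vᵀ (Matrix.toEuclideanLin (Matrix.diagonal σ) c)⟫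
        = (Vᵀ *ᵥ fun j => c j) ⬝ᵥ (Vᵀ *ᵥ (Matrix.diagonal σ *ᵥ fun j => c j)) := by
          rw [ip_sum]; rfl
      _ = (fun j => c j) ⬝ᵥ (Matrix.diagonal σ *ᵥ fun j => c j) := hdotV _ _
      _ = ∑ i, σ i * c i ^ 2 := by
          simp [dotProduct, Matrix.mulVec_diagonal]
          congr 1; funext i; ring
  have hpp : ⟪p, p⟫ = ∑ i, c i ^ 2 := by
    calc ⟪p, p⟫ = (Vᵀ *ᵥ fun j => c j) ⬝ᵥ (Vᵀ *ᵥ fun j => c j) := by rw [ip_sum]; rfl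
      _ = (fun j => c j) ⬝ᵥ (fun j => c j) := hdotV _ _
      _ = ∑ i, c i ^ 2 := by simp [dotProduct]; congr 1; funext i; ring
  -- clipping per-coordinate facts
  have hclip : ∀ i, u i * c i = min (ρ * |u i|) ((σ i)⁻¹ * |u i| ^ 2)
      ∧ σ i * c i ^ 2 ≤ u i * c i := by
    intro i
    rw [hcc i]
    exact clip_coord (hσpos i) hρ
  -- norm bound
  have hcρ : ∀ i, c i ^ 2 ≤ ρ ^ 2 := by
    intro i
    rw [hcc i]
    apply sq_le_sq'
    · exact le_max_right _ _
    · exact max_le (min_le_right _ _) (by linarith)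
  have hpnorm : ‖p‖ ≤ ρ * Real.sqrt d := by
    have h1 : ‖p‖ ^ 2 = ∑ i, c i ^ 2 := by
      rw [← real_inner_self_eq_norm_sq, hpp]
    have h2 : (∑ i, c i ^ 2) ≤ (d : ℝ) * ρ ^ 2 := by
      calc (∑ i, c i ^ 2) ≤ ∑ _i : Fin d, ρ ^ 2 := Finset.sum_le_sum (fun i _ => hcρ i)
        _ = (d : ℝ) * ρ ^ 2 := by simp [mul_comm]
    have h3 : ‖p‖ ^ 2 ≤ (ρ * Real.sqrt d) ^ 2 := by
      rw [mul_pow, Real.sq_sqrt (Nat.cast_nonneg d)]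
      rw [h1]; linarith
    calc ‖p‖ = Real.sqrt (‖p‖ ^ 2) := (Real.sqrt_sq (norm_nonneg p)).symm
      _ ≤ Real.sqrt ((ρ * Real.sqrt d) ^ 2) := Real.sqrt_le_sqrt h3
      _ = ρ * Real.sqrt d := Real.sqrt_sq (by positivity)
  have hwR : ‖w‖ ≤ R := by
    have h1 : ‖w‖ = η * ‖p‖ := by
      rw [hwdef, norm_smul, Real.norm_eq_abs, abs_of_pos hη]
    rcases eq_or_lt_of_le (Real.sqrt_nonneg (d : ℝ)) with hd | hd
    · have : ‖p‖ = 0 := le_antisymm (by rw [← hd] at hpnorm; simpa using hpnorm) (norm_nonneg p)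
      rw [h1, this, mul_zero]; exact hR.le
    · have h2 : η * ρ * Real.sqrt d ≤ R := by
        rw [← le_div_iff₀ hd] at *
        exact hηρ
      calc ‖w‖ = η * ‖p‖ := h1
        _ ≤ η * (ρ * Real.sqrt d) := by
            exact mul_le_mul_of_nonneg_left hpnorm hη.le
        _ = η * ρ * Real.sqrt d := by ring
        _ ≤ R := h2
  -- quadratic comparison along segment
  have hquad : ∀ s ∈ Set.Icc (0:ℝ) 1,
      ⟪w, Matrix.toEuclideanLin (hess (θ - s • w)) w⟫
        ≤ 2 * ⟪w, Matrix.toEuclideanLin (hess θ) w⟫ := by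
    intro s hs
    apply quad_comp (hess θ) (hess (θ - s • w)) (hpd θ) (hpd _).1
    apply hhessLip (θ - s • w) θ
    have h1 : θ - s • w - θ = -(s • w) := by abel
    rw [h1, norm_neg, norm_smul, Real.norm_eq_abs, abs_of_nonneg hs.1]
    calc s * ‖w‖ ≤ 1 * ‖w‖ := mul_le_mul_of_nonneg_right hs.2 (norm_nonneg w)
      _ = ‖w‖ := one_mul _
      _ ≤ R := hwR
  -- the descent inequality
  have hdesc := descent_general L grad hess hgrad hhess θ w
    (⟪w, Matrix.toEuclideanLin (hess θ) w⟫) hquad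
  -- rewrite inner products
  have hgw : ⟪g, w⟫ = η * ∑ i, u i * c i := by
    rw [hwdef, real_inner_smul_right, hgp]
  have hww : ⟪w, Matrix.toEuclideanLin (hess θ) w⟫ = η ^ 2 * ∑ i, σ i * c i ^ 2 := by
    rw [hwdef, _root_.map_smul, real_inner_smul_left, real_inner_smul_right, hQsum]
    ring
  rw [hgw, hww] at hdesc
  -- final algebra
  have hmineq : (∑ i, min (ρ * |u i|) ((σ i)⁻¹ * |u i| ^ 2)) = ∑ i, u i * c i := by
    apply Finset.sum_congr rfl
    intro i _
    exact ((hclip i).1).symm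
  have hTS : (∑ i, σ i * c i ^ 2) ≤ ∑ i, u i * c i :=
    Finset.sum_le_sum (fun i _ => (hclip i).2)
  rw [hmineq]
  have h5 : η ^ 2 * (∑ i, σ i * c i ^ 2) ≤ η ^ 2 * ∑ i, u i * c i :=
    mul_le_mul_of_nonneg_left hTS (sq_nonneg η)
  calc L (θ - w) - L θ ≤ -(η * ∑ i, u i * c i) + η ^ 2 * ∑ i, σ i * c i ^ 2 := hdesc
    _ ≤ -(η * ∑ i, u i * c i) + η ^ 2 * ∑ i, u i * c i := by linarith
    _ = -(η - η ^ 2) * ∑ i, u i * c i := by ring
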